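/- Let D ≥ 1, let μ ∈ ℝ, σ > 0, and let X₀, X₁, …, X_D be i.i.d. random variables with Gaussian distribution N(μ, σ²). Fix a binary pattern b = (b₁, …, b_D) ∈ {0,1}^D and let k = Σ_{j=1}^D b_j. Then the probability of the static pattern event, P( ⋂_{j=1}^D { X_D >^{b_j} X_{D−j} } ) — where X_D >^{b_j} X_{D−j} means X_D > X_{D−j} if b_j = 1 and X_D ≤ X_{D−j} if b_j = 0 — equals the beta function value B(k+1, D−k+1) = k!·(D−k)! / (D+1)!. -/

import Mathlib

open MeasureTheory ProbabilityTheory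

/-- The beta function `B(a,b) = Γ(a)Γ(b)/Γ(a+b)`. -/
noncomputable def betaFn (a b : ℝ) : ℝ := Real.Gamma a * Real.Gamma b / Real.Gamma (a + b)

/-- `cmpB b x y` means `x > y` if `b = 1` and `x ≤ y` if `b = 0`. -/
def cmpB (b : Bool) (x y : ℝ) : Prop := if b then x > y else x ≤ y

section Aux

open Set Filter
open scoped ENNReal NNReal Topology

lemma betaFn_factorial (k m : ℕ) :
    betaFn ((k:ℝ)+1) ((m:ℝ)+1) = (k.factorial * m.factorial : ℝ) / ((k+m+1).factorial) := by
  unfold betaFn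
  have h1 : ((k:ℝ)+1) + ((m:ℝ)+1) = ((k+m+1 : ℕ):ℝ) + 1 := by push_cast; ring
  rw [h1, Real.Gamma_nat_eq_factorial, Real.Gamma_nat_eq_factorial, Real.Gamma_nat_eq_factorial]

lemma integral_pow_mul_one_sub_pow (k m : ℕ) :
    ∫ u in (0:ℝ)..1, u^k * (1-u)^m = (k.factorial * m.factorial : ℝ) / ((k+m+1).factorial) := by
  have hs : (0:ℝ) < ((k:ℂ)+1).re := by simp; positivity
  have ht : (0:ℝ) < ((m:ℂ)+1).re := by simp; positivity
  have hB := Complex.Gamma_mul_Gamma_eq_betaIntegral hs ht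
  have hBeq : Complex.betaIntegral ((k:ℂ)+1) ((m:ℂ)+1)
      = ((∫ u in (0:ℝ)..1, u^k * (1-u)^m : ℝ) : ℂ) := by
    rw [Complex.betaIntegral]
    rw [← intervalIntegral.integral_ofReal]
    apply intervalIntegral.integral_congr
    intro x _
    have : ((k:ℂ)+1-1) = ((k:ℕ):ℂ) := by ring
    have h2 : ((m:ℂ)+1-1) = ((m:ℕ):ℂ) := by ring
    simp only [this, h2, Complex.cpow_natCast]
    push_cast
    ring
  have hGk : Complex.Gamma ((k:ℂ)+1) = (k.factorial : ℂ) := by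
    exact_mod_cast Complex.Gamma_nat_eq_factorial k
  have hGm : Complex.Gamma ((m:ℂ)+1) = (m.factorial : ℂ) := by
    exact_mod_cast Complex.Gamma_nat_eq_factorial m
  have hsum : ((k:ℂ)+1) + ((m:ℂ)+1) = ((k+m+1 : ℕ):ℂ) + 1 := by push_cast; ring
  have hGs : Complex.Gamma (((k:ℂ)+1) + ((m:ℂ)+1)) = ((k+m+1).factorial : ℂ) := by
    rw [hsum]; exact_mod_cast Complex.Gamma_nat_eq_factorial (k+m+1)
  rw [hGk, hGm, hGs, hBeq] at hB
  have hR : (k.factorial * m.factorial : ℝ)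
      = ((k+m+1).factorial : ℝ) * ∫ u in (0:ℝ)..1, u^k * (1-u)^m := by
    exact_mod_cast hB
  have hne : (((k+m+1).factorial : ℝ)) ≠ 0 := by positivity
  field_simp [hR]
  rw [hR]; ring

namespace SPAux

variable (m : ℝ) {v : ℝ≥0}

noncomputable def cdf (v : ℝ≥0) (y : ℝ) : ℝ := ∫ t in Set.Iic y, gaussianPDFReal m v t

lemma continuous_pdf (v : ℝ≥0) : Continuous (gaussianPDFReal m v) := by
  unfold gaussianPDFReal
  fun_prop

lemma cdf_nonneg (v : ℝ≥0) (y : ℝ) : 0 ≤ cdf m v y :=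
  integral_nonneg fun _ => gaussianPDFReal_nonneg m v _

lemma gauss_Iic {v : ℝ≥0} (hv : v ≠ 0) (y : ℝ) :
    gaussianReal m v (Set.Iic y) = ENNReal.ofReal (cdf m v y) := by
  rw [gaussianReal_apply_eq_integral m hv, cdf]

lemma gauss_singleton {v : ℝ≥0} (hv : v ≠ 0) (y : ℝ) : gaussianReal m v {y} = 0 :=
  gaussianReal_absolutelyContinuous m hv (measure_singleton y)

lemma gauss_Iio {v : ℝ≥0} (hv : v ≠ 0) (y : ℝ) :
    gaussianReal m v (Set.Iio y) = ENNReal.ofReal (cdf m v y) := by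
  have h : gaussianReal m v (Set.Iic y) = gaussianReal m v (Set.Iio y) := by
    rw [← Set.Iio_union_right]
    rw [measure_union (by simp) (measurableSet_singleton y), gauss_singleton m hv, add_zero]
  rw [← h, gauss_Iic m hv]

lemma cdf_le_one {v : ℝ≥0} (hv : v ≠ 0) (y : ℝ) : cdf m v y ≤ 1 := by
  have h := gauss_Iic m hv y
  have h2 : gaussianReal m v (Set.Iic y) ≤ 1 := prob_le_one
  rw [h] at h2
  by_contra hlt
  push_neg at hlt
  have := ENNReal.ofReal_lt_ofReal_iff_of_nonneg (by norm_num : (0:ℝ) ≤ 1) |>.mpr hlt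
  simp only [ENNReal.ofReal_one] at this
  exact absurd h2 (not_le.mpr this)

lemma gauss_Ici {v : ℝ≥0} (hv : v ≠ 0) (y : ℝ) :
    gaussianReal m v (Set.Ici y) = ENNReal.ofReal (1 - cdf m v y) := by
  have hcompl : Set.Ici y = (Set.Iio y)ᶜ := by simp
  rw [hcompl, measure_compl measurableSet_Iio (measure_ne_top _ _), gauss_Iio m hv,
    measure_univ, ← ENNReal.ofReal_one, ← ENNReal.ofReal_sub _ (cdf_nonneg m v y)]

lemma hasDerivAt_cdf (y : ℝ) : HasDerivAt (cdf m v) (gaussianPDFReal m v y) y := by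
  have hint : ∀ a b : ℝ, IntervalIntegrable (gaussianPDFReal m v) volume a b :=
    fun a b => (integrable_gaussianPDFReal m v).intervalIntegrable
  have h : HasDerivAt (fun u => ∫ t in (0:ℝ)..u, gaussianPDFReal m v t)
      (gaussianPDFReal m v y) y :=
    intervalIntegral.integral_hasDerivAt_right (hint 0 y)
      ((continuous_pdf m v).stronglyMeasurable.stronglyMeasurableAtFilter)
      (continuous_pdf m v).continuousAt
  have heq : ∀ u : ℝ, cdf m v u = cdf m v 0 + ∫ t in (0:ℝ)..u, gaussianPDFReal m v t := by
    intro u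
    have h2 : cdf m v u - cdf m v 0 = ∫ t in (0:ℝ)..u, gaussianPDFReal m v t := by
      rw [cdf, cdf, ← intervalIntegral.integral_Iic_sub_Iic
        ((integrable_gaussianPDFReal m v).integrableOn)
        ((integrable_gaussianPDFReal m v).integrableOn)]
    linarith [h2]
  have := h.const_add (cdf m v 0)
  exact HasDerivAt.congr_of_eventuallyEq this (Filter.Eventually.of_forall heq)

lemma continuous_cdf : Continuous (cdf m v) := by
  have : ∀ y, HasDerivAt (cdf m v) (gaussianPDFReal m v y) y := hasDerivAt_cdf m
  exact continuous_iff_continuousAt.mpr fun y => (this y).continuousAt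

lemma strictMono_cdf {v : ℝ≥0} (hv : v ≠ 0) : StrictMono (cdf m v) := by
  intro a y hay
  have h2 : cdf m v y - cdf m v a = ∫ t in a..y, gaussianPDFReal m v t := by
    rw [cdf, cdf, ← intervalIntegral.integral_Iic_sub_Iic
      ((integrable_gaussianPDFReal m v).integrableOn)
      ((integrable_gaussianPDFReal m v).integrableOn)]
  have hpos : 0 < ∫ t in a..y, gaussianPDFReal m v t := by
    apply intervalIntegral.intervalIntegral_pos_of_pos
      ((integrable_gaussianPDFReal m v).intervalIntegrable)
      (fun x => gaussianPDFReal_pos m v x hv) hay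
  linarith

lemma tendsto_cdf_atTop {v : ℝ≥0} (hv : v ≠ 0) : Tendsto (cdf m v) atTop (𝓝 1) := by
  have h1 : Tendsto (fun y => gaussianReal m v (Set.Iic y)) atTop (𝓝 1) := by
    have := tendsto_measure_Iic_atTop (gaussianReal m v)
    simpa [measure_univ] using this
  have h2 : Tendsto (fun y => (gaussianReal m v (Set.Iic y)).toReal) atTop (𝓝 1) := by
    have := (ENNReal.tendsto_toReal (by norm_num : (1:ℝ≥0∞) ≠ ⊤)).comp h1
    exact this
  convert h2 using 2 with y
  rw [gauss_Iic m hv, ENNReal.toReal_ofReal (cdf_nonneg m v y)]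

lemma tendsto_cdf_atBot {v : ℝ≥0} (hv : v ≠ 0) : Tendsto (cdf m v) atBot (𝓝 0) := by
  have h1 : Tendsto (fun y => gaussianReal m v (Set.Ici y)) atBot (𝓝 1) := by
    have := tendsto_measure_Ici_atBot (gaussianReal m v)
    simpa [measure_univ] using this
  have h2 : Tendsto (fun y => (gaussianReal m v (Set.Ici y)).toReal) atBot (𝓝 1) := by
    have := (ENNReal.tendsto_toReal (by norm_num : (1:ℝ≥0∞) ≠ ⊤)).comp h1
    exact this
  have h3 : ∀ y, (gaussianReal m v (Set.Ici y)).toReal = 1 - cdf m v y := by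
    intro y
    rw [gauss_Ici m hv, ENNReal.toReal_ofReal (by linarith [cdf_le_one m hv y])]
  simp_rw [h3] at h2
  have := h2.const_sub 1
  simpa using this

lemma range_cdf {v : ℝ≥0} (hv : v ≠ 0) : Set.range (cdf m v) = Set.Ioo 0 1 := by
  apply Set.Subset.antisymm
  · rintro _ ⟨y, rfl⟩
    constructor
    · obtain ⟨a, ha⟩ : ∃ a, a < y := ⟨y - 1, by linarith⟩
      exact lt_of_le_of_lt (cdf_nonneg m v a) (strictMono_cdf m hv ha)
    · obtain ⟨b, hb⟩ : ∃ b, y < b := ⟨y + 1, by linarith⟩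
      exact lt_of_lt_of_le (strictMono_cdf m hv hb) (cdf_le_one m hv b)
  · rintro u ⟨hu0, hu1⟩
    obtain ⟨a, ha⟩ : ∃ a, cdf m v a < u := by
      have := (tendsto_cdf_atBot m hv).eventually (eventually_lt_nhds hu0)
      exact (this.exists)
    obtain ⟨b, hb⟩ : ∃ b, u < cdf m v b := by
      have := (tendsto_cdf_atTop m hv).eventually (eventually_gt_nhds hu1)
      exact (this.exists)
    have hab : a ≤ b := by
      by_contra hab
      push_neg at hab
      exact absurd (strictMono_cdf m hv hab) (by linarith)
    have hmem : u ∈ Set.Ioo (cdf m v a) (cdf m v b) := ⟨ha, hb⟩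
    obtain ⟨x, _, hx⟩ := intermediate_value_Ioo hab
      (Continuous.continuousOn (continuous_cdf m (v := v))) hmem
    exact ⟨x, hx⟩

lemma integral_comp_cdf {v : ℝ≥0} (hv : v ≠ 0) (g : ℝ → ℝ) :
    ∫ y, gaussianPDFReal m v y * g (cdf m v y) = ∫ u in Set.Ioo (0:ℝ) 1, g u := by
  have h := integral_image_eq_integral_abs_deriv_smul MeasurableSet.univ
    (fun x _ => (hasDerivAt_cdf m x).hasDerivWithinAt) ((strictMono_cdf m hv).injective.injOn) g
  rw [Set.image_univ, range_cdf m hv, Measure.restrict_univ] at h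
  rw [h]
  apply integral_congr_ae
  filter_upwards with y
  rw [smul_eq_mul, abs_of_nonneg (gaussianPDFReal_nonneg m v y)]

lemma integral_gauss {v : ℝ≥0} (hv : v ≠ 0) (h : ℝ → ℝ) :
    ∫ y, h y ∂(gaussianReal m v) = ∫ y, gaussianPDFReal m v y * h y := by
  rw [gaussianReal_of_var_ne_zero m hv]
  have heq : gaussianPDF m v = fun x => ((gaussianPDFReal m v x).toNNReal : ℝ≥0∞) := rfl
  rw [heq, integral_withDensity_eq_integral_smul ((measurable_gaussianPDFReal m v).real_toNNReal)]
  apply integral_congr_ae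
  filter_upwards with y
  rw [NNReal.smul_def, Real.coe_toNNReal _ (gaussianPDFReal_nonneg m v y), smul_eq_mul]

lemma lintegral_cdf_pow {v : ℝ≥0} (hv : v ≠ 0) (k n : ℕ) :
    ∫⁻ y, ENNReal.ofReal ((cdf m v y)^k * (1 - cdf m v y)^n) ∂(gaussianReal m v)
      = ENNReal.ofReal (∫ u in (0:ℝ)..1, u^k * (1-u)^n) := by
  set g : ℝ → ℝ := fun u => u^k * (1-u)^n with hg
  have hcont : Continuous fun y => g (cdf m v y) := by
    apply Continuous.mul
    · exact (continuous_cdf m).pow k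
    · exact ((continuous_const.sub (continuous_cdf m)).pow n)
  have hnn : ∀ y, 0 ≤ g (cdf m v y) := by
    intro y
    apply mul_nonneg (pow_nonneg (cdf_nonneg m v y) k)
    exact pow_nonneg (by linarith [cdf_le_one m hv y]) n
  have hbd : ∀ y, g (cdf m v y) ≤ 1 := by
    intro y
    have h1 := cdf_nonneg m v y
    have h2 := cdf_le_one m hv y
    have : g (cdf m v y) = (cdf m v y)^k * (1 - cdf m v y)^n := rfl
    rw [this]
    calc (cdf m v y)^k * (1 - cdf m v y)^n ≤ 1 * 1 := by
          apply mul_le_mul (pow_le_one₀ h1 h2) (pow_le_one₀ (by linarith) (by linarith))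
            (pow_nonneg (by linarith) n) (by norm_num)
      _ = 1 := by norm_num
  have hint : Integrable (fun y => g (cdf m v y)) (gaussianReal m v) := by
    apply Integrable.mono' (integrable_const 1) hcont.aestronglyMeasurable
    filter_upwards with y
    rw [Real.norm_eq_abs, abs_of_nonneg (hnn y)]
    exact hbd y
  rw [← ofReal_integral_eq_lintegral_ofReal hint (Filter.Eventually.of_forall hnn)]
  congr 1
  rw [integral_gauss m hv, integral_comp_cdf m hv,
    intervalIntegral.integral_of_le (by norm_num : (0:ℝ) ≤ 1), integral_Ioc_eq_integral_Ioo]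

end SPAux

lemma joint_law {Ω : Type*} [MeasurableSpace Ω] (P : Measure Ω) [IsProbabilityMeasure P]
    {ι : Type*} [Fintype ι] (X : ι → Ω → ℝ) (hmeas : ∀ i, Measurable (X i))
    (hindep : iIndepFun X P)
    (ν : Measure ℝ) [IsProbabilityMeasure ν] (hdist : ∀ i, Measure.map (X i) P = ν) :
    Measure.map (fun ω i => X i ω) P = Measure.pi (fun _ : ι => ν) := by
  refine (Measure.pi_eq ?_).symm
  intro s hs
  rw [Measure.map_apply (measurable_pi_lambda _ hmeas) (MeasurableSet.univ_pi hs)]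
  have hpre : (fun ω i => X i ω) ⁻¹' (Set.pi Set.univ s) = ⋂ i ∈ Finset.univ, X i ⁻¹' s i := by
    ext ω; simp [Set.mem_univ_pi]
  rw [hpre, hindep.measure_inter_preimage_eq_mul Finset.univ (fun i _ => hs i)]
  refine Finset.prod_congr rfl fun i _ => ?_
  rw [← hdist i, Measure.map_apply (hmeas i) (hs i)]

lemma cmpB_mem (bb : Bool) (y t : ℝ) :
    cmpB bb y t ↔ t ∈ (if bb then Set.Iio y else Set.Ici y) := by
  cases bb <;> simp [cmpB]

end Aux

/-- for i.i.d. Gaussian samples `X₀, …, X_D`, the probability of the static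
pattern event `⋂_{j=1}^D {X_D >^{b_j} X_{D-j}}` equals
`B(k+1, D-k+1) = k!·(D-k)!/(D+1)!` where `k = Σ_j b_j`. -/
theorem static_pattern_probability
    {Ω : Type*} [MeasurableSpace Ω] (P : Measure Ω) [IsProbabilityMeasure P]
    (D : ℕ) (hD : 1 ≤ D) (μ σ : ℝ) (hσ : 0 < σ)
    (X : Fin (D + 1) → Ω → ℝ) (hmeas : ∀ i, Measurable (X i))
    (hindep : iIndepFun X P)
    (hdist : ∀ i, Measure.map (X i) P = gaussianReal μ ⟨σ ^ 2, sq_nonneg σ⟩)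
    (b : Fin D → Bool) (k : ℕ) (hk : k = ∑ j, if b j then 1 else 0) :
    (P (⋂ j : Fin D, {ω | cmpB (b j)
        (X ⟨D, Nat.lt_succ_self D⟩ ω)
        (X ⟨D - (j.val + 1), Nat.lt_succ_of_le (Nat.sub_le _ _)⟩ ω)})).toReal
      = betaFn ((k : ℝ) + 1) ((D : ℝ) - (k : ℝ) + 1) ∧
    betaFn ((k : ℝ) + 1) ((D : ℝ) - (k : ℝ) + 1)
      = ((Nat.factorial k : ℝ) * (Nat.factorial (D - k) : ℝ)) / (Nat.factorial (D + 1) : ℝ) := by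
  classical
  set v : NNReal := ⟨σ ^ 2, sq_nonneg σ⟩ with hvdef
  have hv : v ≠ 0 := by
    intro h
    have h2 : σ ^ 2 = 0 := congrArg NNReal.toReal h
    have : (0:ℝ) < σ ^ 2 := by positivity
    linarith
  set γ : Measure ℝ := gaussianReal μ v with hγ
  have hkD : k ≤ D := by
    rw [hk]
    calc (∑ j : Fin D, if b j then 1 else 0) ≤ ∑ _j : Fin D, 1 :=
          Finset.sum_le_sum (fun j _ => by split <;> omega)
      _ = D := by simp
  have hfact : betaFn ((k:ℝ)+1) ((D:ℝ)-(k:ℝ)+1)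
      = ((Nat.factorial k : ℝ) * (Nat.factorial (D - k) : ℝ)) / (Nat.factorial (D + 1) : ℝ) := by
    have hcast : (D:ℝ) - (k:ℝ) + 1 = ((D - k : ℕ):ℝ) + 1 := by
      rw [Nat.cast_sub hkD]
    rw [hcast, betaFn_factorial]
    have : k + (D - k) + 1 = D + 1 := by omega
    rw [this]
  refine ⟨?_, hfact⟩
  -- index involution
  set c : Fin D → Fin D := fun j => ⟨D - (j.val + 1), by omega⟩ with hc
  have hcc : ∀ i : Fin D, c (c i) = i := by
    intro i
    have hi := i.isLt
    apply Fin.ext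
    simp only [hc]
    omega
  have hcinv : Function.Involutive c := hcc
  -- the set in product space
  set T : Set (Fin (D+1) → ℝ) :=
    ⋂ j : Fin D, {x | cmpB (b j) (x (Fin.last D)) (x (Fin.castSucc (c j)))} with hT
  have hTmeas : MeasurableSet T := by
    apply MeasurableSet.iInter
    intro j
    rcases Bool.dichotomy (b j) with h | h
    · have heq : {x : Fin (D+1) → ℝ | cmpB (b j) (x (Fin.last D)) (x (Fin.castSucc (c j)))}
          = {x : Fin (D+1) → ℝ | x (Fin.last D) ≤ x (Fin.castSucc (c j))} := by
        ext x; simp [cmpB, h]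
      rw [heq]
      exact measurableSet_le (measurable_pi_apply _) (measurable_pi_apply _)
    · have heq : {x : Fin (D+1) → ℝ | cmpB (b j) (x (Fin.last D)) (x (Fin.castSucc (c j)))}
          = {x : Fin (D+1) → ℝ | x (Fin.castSucc (c j)) < x (Fin.last D)} := by
        ext x; simp [cmpB, h]
      rw [heq]
      exact measurableSet_lt (measurable_pi_apply _) (measurable_pi_apply _)
  have hev : (⋂ j : Fin D, {ω | cmpB (b j)
        (X ⟨D, Nat.lt_succ_self D⟩ ω)
        (X ⟨D - (j.val + 1), Nat.lt_succ_of_le (Nat.sub_le _ _)⟩ ω)})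
      = (fun ω i => X i ω) ⁻¹' T := by
    ext ω
    simp only [hT, Set.mem_iInter, Set.mem_preimage, Set.mem_setOf_eq]
    exact Iff.rfl
  have hdist' : ∀ i, Measure.map (X i) P = γ := hdist
  have hjoint : Measure.map (fun ω i => X i ω) P = Measure.pi (fun _ : Fin (D+1) => γ) :=
    joint_law P X hmeas hindep γ hdist'
  rw [hev, ← Measure.map_apply (measurable_pi_lambda _ hmeas) hTmeas, hjoint]
  -- split off the last coordinate
  set e := MeasurableEquiv.piFinSuccAbove (fun _ : Fin (D+1) => ℝ) (Fin.last D) with he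
  have hmp := measurePreserving_piFinSuccAbove (fun _ : Fin (D+1) => γ) (Fin.last D)
  have hfsplit : (Measure.pi fun _ : Fin (D+1) => γ) T
      = (γ.prod (Measure.pi fun _ : Fin D => γ)) (e.symm ⁻¹' T) := by
    rw [(hmp.symm e).measure_preimage hTmeas.nullMeasurableSet]
  -- sections
  have hsymm_apply : ∀ (y : ℝ) (z : Fin D → ℝ),
      e.symm (y, z) = (Fin.last D).insertNth y z := fun y z => rfl
  have hlast : ∀ (y : ℝ) (z : Fin D → ℝ), e.symm (y, z) (Fin.last D) = y := by
    intro y z; rw [hsymm_apply, Fin.insertNth_apply_same]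
  have hins : ∀ (y : ℝ) (z : Fin D → ℝ) (i : Fin D),
      e.symm (y, z) (Fin.castSucc i) = z i := by
    intro y z i
    rw [hsymm_apply, ← Fin.succAbove_last, Fin.insertNth_apply_succAbove]
  have hSsec : ∀ y : ℝ, (Prod.mk y ⁻¹' (e.symm ⁻¹' T))
      = Set.pi Set.univ (fun i : Fin D => if b (c i) then Set.Iio y else Set.Ici y) := by
    intro y
    ext z
    simp only [Set.mem_preimage, hT, Set.mem_iInter, Set.mem_setOf_eq, Set.mem_univ_pi]
    constructor
    · intro h i
      have h2 := h (c i)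
      rw [hlast, hins, hcc, cmpB_mem] at h2
      exact h2
    · intro h j
      have h2 := h (c j)
      rw [hcc] at h2
      rw [hlast, hins, cmpB_mem]
      exact h2
  have hsec_meas : MeasurableSet (e.symm ⁻¹' T) := e.symm.measurable hTmeas
  have hprod : ∀ y : ℝ, (Measure.pi fun _ : Fin D => γ) (Prod.mk y ⁻¹' (e.symm ⁻¹' T))
      = ENNReal.ofReal ((SPAux.cdf μ v y)^k * (1 - SPAux.cdf μ v y)^(D-k)) := by
    intro y
    rw [hSsec y, Measure.pi_pi]
    have h1 : ∀ i : Fin D, γ (if b (c i) then Set.Iio y else Set.Ici y)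
        = if b (c i) then ENNReal.ofReal (SPAux.cdf μ v y)
          else ENNReal.ofReal (1 - SPAux.cdf μ v y) := by
      intro i
      split
      · exact SPAux.gauss_Iio μ hv y
      · exact SPAux.gauss_Ici μ hv y
    simp_rw [h1]
    have h2 : ∏ i : Fin D, (if b (c i) then ENNReal.ofReal (SPAux.cdf μ v y)
          else ENNReal.ofReal (1 - SPAux.cdf μ v y))
        = ∏ j : Fin D, (if b j then ENNReal.ofReal (SPAux.cdf μ v y)
          else ENNReal.ofReal (1 - SPAux.cdf μ v y)) :=
      Equiv.prod_comp hcinv.toPerm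
        (fun j => if b j then ENNReal.ofReal (SPAux.cdf μ v y)
          else ENNReal.ofReal (1 - SPAux.cdf μ v y))
    rw [h2, Finset.prod_ite, Finset.prod_const, Finset.prod_const]
    have hcard1 : (Finset.univ.filter (fun j : Fin D => b j = true)).card = k := by
      rw [hk]
      simp [Finset.sum_boole]
    have hcard2 : (Finset.univ.filter (fun j : Fin D => ¬ (b j = true))).card = D - k := by
      have := Finset.card_filter_add_card_filter_not
        (s := (Finset.univ : Finset (Fin D))) (p := fun j => b j = true)
      rw [hcard1] at this
      simp only [Finset.card_univ, Fintype.card_fin] at this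
      omega
    rw [hcard1, hcard2]
    rw [← ENNReal.ofReal_pow (SPAux.cdf_nonneg μ v y), ← ENNReal.ofReal_pow (by
      linarith [SPAux.cdf_le_one μ hv y]),
      ← ENNReal.ofReal_mul (pow_nonneg (SPAux.cdf_nonneg μ v y) k)]
  rw [hfsplit, Measure.prod_apply hsec_meas] at *
  simp_rw [hprod]
  rw [SPAux.lintegral_cdf_pow μ hv k (D-k), integral_pow_mul_one_sub_pow,
    ENNReal.toReal_ofReal (by positivity), hfact]
  have : k + (D - k) + 1 = D + 1 := by omega
  rw [this]
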